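/- In the stretched diameter graph A_{k,P}, for all 0 ≤ i, j ≤ k−1 with i ≠ j one has d(ℓ′_i, r′_j) = 4P + 1, and for all 0 ≤ i ≤ k−1 one has d(ℓ′_i, r′_i) = 6P + 1. -/

import Mathlib

/-!
Statement 6: In the stretched diameter graph `A_{k,P}`, for all
`0 ≤ i, j ≤ k−1` with `i ≠ j` one has `d(ℓ′_i, r′_j) = 4P + 1`, and for all
`0 ≤ i ≤ k−1` one has `d(ℓ′_i, r′_i) = 6P + 1`.
-/

/-- Generic graph built from "hub" vertices and "segments": each segment `s`
is a path with `len s` edges between the two hubs `ends s`, whose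
`len s - 1` internal vertices are the pairs `⟨s, t⟩`.  A segment of length 1
is just an edge between its two endpoints. -/
def segGraph {Hub Seg : Type} (ends : Seg → Hub × Hub) (len : Seg → ℕ) :
    SimpleGraph (Hub ⊕ (s : Seg) × Fin (len s - 1)) :=
  SimpleGraph.fromRel fun u v =>
    match u, v with
    | Sum.inl x, Sum.inl y => ∃ s, len s = 1 ∧ ends s = (x, y)
    | Sum.inl x, Sum.inr ⟨s, t⟩ =>
        ((ends s).1 = x ∧ (t : ℕ) = 0) ∨ ((ends s).2 = x ∧ (t : ℕ) + 2 = len s)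
    | Sum.inr ⟨s, t⟩, Sum.inl x =>
        ((ends s).1 = x ∧ (t : ℕ) = 0) ∨ ((ends s).2 = x ∧ (t : ℕ) + 2 = len s)
    | Sum.inr ⟨s, t⟩, Sum.inr ⟨s', t'⟩ =>
        s = s' ∧ ((t : ℕ) + 1 = (t' : ℕ) ∨ (t' : ℕ) + 1 = (t : ℕ))

section Generic

variable {Hub Seg : Type} {ends : Seg → Hub × Hub} {len : Seg → ℕ}

/-- Extension of a hub potential to all vertices. -/
def segH (ends : Seg → Hub × Hub) (len : Seg → ℕ) (H : Hub → ℕ) :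
    (Hub ⊕ (s : Seg) × Fin (len s - 1)) → ℕ
  | Sum.inl x => H x
  | Sum.inr ⟨s, t⟩ =>
      min (H (ends s).1 + ((t : ℕ) + 1)) (H (ends s).2 + (len s - ((t : ℕ) + 1)))

@[simp] lemma segH_inl (H : Hub → ℕ) (x : Hub) :
    segH ends len H (Sum.inl x) = H x := rfl

lemma segH_lip (H : Hub → ℕ)
    (hH : ∀ s, H (ends s).1 ≤ H (ends s).2 + len s ∧
               H (ends s).2 ≤ H (ends s).1 + len s) :
    ∀ u v, (segGraph ends len).Adj u v →
      segH ends len H v ≤ segH ends len H u + 1 := by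
  intro u v hadj
  rw [segGraph, SimpleGraph.fromRel_adj] at hadj
  obtain ⟨hne, h⟩ := hadj
  rcases u with x | ⟨s, t⟩ <;> rcases v with y | ⟨s', t'⟩
  · obtain (⟨s, h1, h2⟩ | ⟨s, h1, h2⟩) := h <;>
    · have h3 := hH s
      rw [h2] at h3
      simp only [segH] at *
      omega
  · have ht := t'.isLt
    have h3 := hH s'
    obtain ((⟨h1, h2⟩ | ⟨h1, h2⟩) | (⟨h1, h2⟩ | ⟨h1, h2⟩)) := h <;>
      subst h1 <;> simp only [segH] <;> omega
  · have ht := t.isLt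
    have h3 := hH s
    obtain ((⟨h1, h2⟩ | ⟨h1, h2⟩) | (⟨h1, h2⟩ | ⟨h1, h2⟩)) := h <;>
      subst h1 <;> simp only [segH] <;> omega
  · have hss : s = s' := by
      obtain (⟨h1, -⟩ | ⟨h1, -⟩) := h
      · exact h1
      · exact h1.symm
    subst hss
    have h2 : (t : ℕ) + 1 = (t' : ℕ) ∨ (t' : ℕ) + 1 = (t : ℕ) := by tauto
    have ht := t.isLt
    have ht' := t'.isLt
    have h3 := hH s
    simp only [segH]
    omega

lemma walk_bound {V : Type*} {G : SimpleGraph V} (h : V → ℕ)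
    (hlip : ∀ u v, G.Adj u v → h v ≤ h u + 1) {u v : V} (w : G.Walk u v) :
    h v ≤ h u + w.length := by
  induction w with
  | nil => simp
  | cons hab w ih =>
    rename_i a b c
    have := hlip a b hab
    simp only [SimpleGraph.Walk.length_cons]
    omega

lemma segGraph_adj_first (s : Seg) (t : Fin (len s - 1)) (ht : (t : ℕ) = 0) :
    (segGraph ends len).Adj (Sum.inl (ends s).1) (Sum.inr ⟨s, t⟩) := by
  rw [segGraph, SimpleGraph.fromRel_adj]
  exact ⟨by simp, Or.inl (Or.inl ⟨rfl, ht⟩)⟩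

lemma segGraph_adj_last (s : Seg) (t : Fin (len s - 1)) (ht : (t : ℕ) + 2 = len s) :
    (segGraph ends len).Adj (Sum.inr ⟨s, t⟩) (Sum.inl (ends s).2) := by
  rw [segGraph, SimpleGraph.fromRel_adj]
  exact ⟨by simp, Or.inl (Or.inr ⟨rfl, ht⟩)⟩

lemma segGraph_adj_step (s : Seg) (t t' : Fin (len s - 1)) (ht : (t : ℕ) + 1 = (t' : ℕ)) :
    (segGraph ends len).Adj (Sum.inr ⟨s, t⟩) (Sum.inr ⟨s, t'⟩) := by
  rw [segGraph, SimpleGraph.fromRel_adj]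
  refine ⟨by simp [Fin.ext_iff]; omega, Or.inl ⟨rfl, Or.inl ht⟩⟩

lemma segGraph_adj_edge (s : Seg) (h1 : len s = 1) (hne : (ends s).1 ≠ (ends s).2) :
    (segGraph ends len).Adj (Sum.inl (ends s).1) (Sum.inl (ends s).2) := by
  rw [segGraph, SimpleGraph.fromRel_adj]
  exact ⟨by simpa using hne, Or.inl ⟨s, h1, by simp⟩⟩

/-- Walk along one segment. -/
lemma exists_segWalk (ends : Seg → Hub × Hub) (len : Seg → ℕ) (s : Seg)
    (h1 : 1 ≤ len s) (hne : (ends s).1 ≠ (ends s).2) :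
    ∃ w : (segGraph ends len).Walk (Sum.inl (ends s).1) (Sum.inl (ends s).2),
      w.length = len s := by
  rcases eq_or_lt_of_le h1 with h1 | h2
  · exact ⟨SimpleGraph.Walk.cons (segGraph_adj_edge s h1.symm hne) SimpleGraph.Walk.nil,
      by simp [h1.symm]⟩
  · have key : ∀ j (hj : j < len s - 1),
        ∃ w : (segGraph ends len).Walk (Sum.inl (ends s).1)
            (Sum.inr ⟨s, ⟨j, hj⟩⟩), w.length = j + 1 := by
      intro j
      induction j with
      | zero =>
        intro hj
        exact ⟨SimpleGraph.Walk.cons (segGraph_adj_first s ⟨0, hj⟩ rfl)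
          SimpleGraph.Walk.nil, by simp⟩
      | succ n ih =>
        intro hj
        obtain ⟨w, hw⟩ := ih (by omega)
        refine ⟨w.append (SimpleGraph.Walk.cons
          (segGraph_adj_step s ⟨n, by omega⟩ ⟨n + 1, hj⟩ rfl) SimpleGraph.Walk.nil), ?_⟩
        simp [hw]
    obtain ⟨w, hw⟩ := key (len s - 2) (by omega)
    refine ⟨w.append (SimpleGraph.Walk.cons
      (segGraph_adj_last s ⟨len s - 2, by omega⟩ (by simp; omega)) SimpleGraph.Walk.nil), ?_⟩
    simp [hw]
    omega

end Generic

namespace StretchDiam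

/-- Hub (distinguished) vertices of the stretched diameter graph `A_{k,P}`. -/
inductive Hub (m : ℕ) : Type
  | L : Fin (2 ^ m) → Hub m
  | L' : Fin (2 ^ m) → Hub m
  | R : Fin (2 ^ m) → Hub m
  | R' : Fin (2 ^ m) → Hub m
  | lk : Hub m
  | lk1 : Hub m
  | rk : Hub m
  | rk1 : Hub m
  | F : Fin m → Hub m
  | T : Fin m → Hub m
  | F' : Fin m → Hub m
  | T' : Fin m → Hub m

/-- Segments (paths between hubs) of `A_{k,P}`. -/
inductive Seg (m : ℕ) : Type
  | Llk : Fin (2 ^ m) → Seg m            -- ℓ_i – ℓ_k, length P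
  | Rrk : Fin (2 ^ m) → Seg m            -- r_i – r_k, length P
  | lklk1 : Seg m                        -- ℓ_k – ℓ_{k+1}, length P
  | rkrk1 : Seg m                        -- r_k – r_{k+1}, length P
  | lk1rk1 : Seg m                       -- edge ℓ_{k+1} – r_{k+1}
  | Lbit : Fin (2 ^ m) → Fin m → Seg m   -- ℓ_i – (f_j or t_j), length P
  | Rbit : Fin (2 ^ m) → Fin m → Seg m   -- r_i – (f'_j or t'_j), length P
  | FT' : Fin m → Seg m                  -- edge f_j – t'_j
  | TF' : Fin m → Seg m                  -- edge t_j – f'_j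
  | Flk1 : Fin m → Seg m                 -- f_j – ℓ_{k+1}, length P
  | Tlk1 : Fin m → Seg m                 -- t_j – ℓ_{k+1}, length P
  | F'rk1 : Fin m → Seg m                -- f'_j – r_{k+1}, length P
  | T'rk1 : Fin m → Seg m                -- t'_j – r_{k+1}, length P
  | L'L : Fin (2 ^ m) → Seg m            -- ℓ'_i – ℓ_i, length P
  | R'R : Fin (2 ^ m) → Seg m            -- r'_i – r_i, length P

open Hub Seg

/-- Endpoints of each segment. -/
def ends (m : ℕ) : Seg m → Hub m × Hub m
  | Llk i => (L i, lk)
  | Rrk i => (R i, rk)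
  | lklk1 => (lk, lk1)
  | rkrk1 => (rk, rk1)
  | lk1rk1 => (lk1, rk1)
  | Lbit i j => (L i, if Nat.testBit i.val j.val then T j else F j)
  | Rbit i j => (R i, if Nat.testBit i.val j.val then T' j else F' j)
  | FT' j => (F j, T' j)
  | TF' j => (T j, F' j)
  | Flk1 j => (F j, lk1)
  | Tlk1 j => (T j, lk1)
  | F'rk1 j => (F' j, rk1)
  | T'rk1 j => (T' j, rk1)
  | L'L i => (L' i, L i)
  | R'R i => (R' i, R i)

/-- Length of each segment: the three special edges have length 1, all other
segments are paths of length `P`. -/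
def len (m P : ℕ) : Seg m → ℕ
  | lk1rk1 => 1
  | FT' _ => 1
  | TF' _ => 1
  | _ => P

/-- Vertices of `A_{k,P}`: hubs together with internal path vertices. -/
abbrev V (m P : ℕ) : Type := Hub m ⊕ (s : Seg m) × Fin (len m P s - 1)

/-- The stretched diameter graph `A_{k,P}`. -/
def A (m P : ℕ) : SimpleGraph (V m P) := segGraph (ends m) (len m P)

/-- Potential giving the `4P+1` lower bound. -/
def H1 (P : ℕ) {m : ℕ} : Hub m → ℕ
  | L _ => P
  | L' _ => 0
  | R _ => 3 * P + 1
  | R' _ => 4 * P + 1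
  | lk => 2 * P
  | lk1 => 3 * P
  | rk => 2 * P + 1
  | rk1 => 3 * P + 1
  | F _ => 2 * P
  | T _ => 2 * P
  | F' _ => 2 * P + 1
  | T' _ => 2 * P + 1

lemma H1_cond (m P : ℕ) : ∀ s : Seg m,
    H1 P (ends m s).1 ≤ H1 P (ends m s).2 + len m P s ∧
    H1 P (ends m s).2 ≤ H1 P (ends m s).1 + len m P s := by
  intro s
  cases s with
  | Lbit i' b => cases hb : Nat.testBit i'.val b.val <;> simp [ends, len, H1, hb] <;> omega
  | Rbit i' b => cases hb : Nat.testBit i'.val b.val <;> simp [ends, len, H1, hb] <;> omega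
  | _ => simp [ends, len, H1] <;> omega

/-- Potential (depending on `i`) giving the `6P+1` lower bound for `d(ℓ'_i, r'_i)`. -/
def H2 (P : ℕ) {m : ℕ} (i : Fin (2 ^ m)) : Hub m → ℕ
  | L i' => if i' = i then P else 3 * P
  | L' i' => if i' = i then 0 else 3 * P
  | R i' => if i' = i then 5 * P + 1 else 3 * P + 1
  | R' i' => if i' = i then 6 * P + 1 else 3 * P + 1
  | lk => 2 * P
  | lk1 => 3 * P
  | rk => 4 * P + 1
  | rk1 => 3 * P + 1
  | F b => if Nat.testBit i.val b.val then 4 * P else 2 * P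
  | T b => if Nat.testBit i.val b.val then 2 * P else 4 * P
  | F' b => if Nat.testBit i.val b.val then 2 * P + 1 else 4 * P + 1
  | T' b => if Nat.testBit i.val b.val then 4 * P + 1 else 2 * P + 1

lemma H2_cond (m P : ℕ) (i : Fin (2 ^ m)) : ∀ s : Seg m,
    H2 P i (ends m s).1 ≤ H2 P i (ends m s).2 + len m P s ∧
    H2 P i (ends m s).2 ≤ H2 P i (ends m s).1 + len m P s := by
  intro s
  cases s with
  | Lbit i' b =>
    rcases eq_or_ne i' i with rfl | hne
    · cases hb : Nat.testBit i'.val b.val <;>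
        simp only [ends, len, H2, hb, if_true, if_false, Bool.false_eq_true,
          if_pos rfl] <;> simp [hb] <;> omega
    · cases hb : Nat.testBit i'.val b.val <;>
        cases hb2 : Nat.testBit i.val b.val <;>
        simp only [ends, len, H2, hb, hb2] <;> simp [hb2, hne] <;> omega
  | Rbit i' b =>
    rcases eq_or_ne i' i with rfl | hne
    · cases hb : Nat.testBit i'.val b.val <;>
        simp only [ends, len, H2, hb] <;> simp [hb] <;> omega
    · cases hb : Nat.testBit i'.val b.val <;>
        cases hb2 : Nat.testBit i.val b.val <;>
        simp only [ends, len, H2, hb, hb2] <;> simp [hb2, hne] <;> omega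
  | _ =>
    first
    | (simp only [ends, len, H2] <;> split_ifs <;> omega)
    | (simp only [ends, len, H2] <;> omega)

/-- Walk along a segment, forward direction. -/
lemma seg_walk (m P : ℕ) (hP : 1 ≤ P) (s : Seg m) (x y : Hub m)
    (hx : (ends m s).1 = x) (hy : (ends m s).2 = y) (hne : x ≠ y) :
    ∃ w : (A m P).Walk (Sum.inl x) (Sum.inl y), w.length = len m P s := by
  obtain ⟨w, hw⟩ := exists_segWalk (ends m) (len m P) s
    (by cases s <;> simp [len] <;> omega) (by rw [hx, hy]; exact hne)
  refine ⟨(w.copy (by rw [hx]) (by rw [hy])), ?_⟩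
  exact (SimpleGraph.Walk.length_copy _ _ _).trans hw

/-- Walk along a segment, backward direction. -/
lemma seg_walk' (m P : ℕ) (hP : 1 ≤ P) (s : Seg m) (x y : Hub m)
    (hx : (ends m s).1 = x) (hy : (ends m s).2 = y) (hne : x ≠ y) :
    ∃ w : (A m P).Walk (Sum.inl y) (Sum.inl x), w.length = len m P s := by
  obtain ⟨w, hw⟩ := seg_walk m P hP s x y hx hy hne
  exact ⟨w.reverse, by simp [hw]⟩

theorem statement6 (m P : ℕ) (hm : 1 ≤ m) (hP : 1 ≤ P) :
    (∀ i j : Fin (2 ^ m), i ≠ j →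
      (A m P).dist (Sum.inl (L' i)) (Sum.inl (R' j)) = 4 * P + 1) ∧
    (∀ i : Fin (2 ^ m),
      (A m P).dist (Sum.inl (L' i)) (Sum.inl (R' i)) = 6 * P + 1) := by
  constructor
  · intro i j hij
    -- find a differing bit
    obtain ⟨b, hb⟩ := Nat.exists_testBit_ne_of_ne (x := i.val) (y := j.val)
      (fun h => hij (Fin.ext h))
    have hbm : b < m := by
      by_contra hbm
      push_neg at hbm
      have h1 : Nat.testBit i.val b = false :=
        Nat.testBit_lt_two_pow (lt_of_lt_of_le i.isLt
          (Nat.pow_le_pow_right (by norm_num) hbm))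
      have h2 : Nat.testBit j.val b = false :=
        Nat.testBit_lt_two_pow (lt_of_lt_of_le j.isLt
          (Nat.pow_le_pow_right (by norm_num) hbm))
      rw [h1, h2] at hb
      exact hb rfl
    set b' : Fin m := ⟨b, hbm⟩ with hb'
    -- upper bound walk
    obtain ⟨w1, hw1⟩ := seg_walk m P hP (L'L i) (L' i) (L i) rfl rfl (by simp)
    obtain ⟨w5, hw5⟩ := seg_walk' m P hP (R'R j) (R' j) (R j) rfl rfl (by simp)
    have hup : ∃ w : (A m P).Walk (Sum.inl (L' i)) (Sum.inl (R' j)),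
        w.length = 4 * P + 1 := by
      cases hib : Nat.testBit i.val b with
      | false =>
        have hjb : Nat.testBit j.val b = true := by
          cases hjb : Nat.testBit j.val b
          · rw [hib, hjb] at hb; exact absurd rfl hb
          · rfl
        obtain ⟨w2, hw2⟩ := seg_walk m P hP (Lbit i b') (L i) (F b')
          rfl (by simp [ends, hb', hib]) (by simp)
        obtain ⟨w3, hw3⟩ := seg_walk m P hP (FT' b') (F b') (T' b') rfl rfl (by simp)
        obtain ⟨w4, hw4⟩ := seg_walk' m P hP (Rbit j b') (R j) (T' b')
          rfl (by simp [ends, hb', hjb]) (by simp)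
        refine ⟨w1.append (w2.append (w3.append (w4.append w5))), ?_⟩
        simp only [SimpleGraph.Walk.length_append, hw1, hw2, hw3, hw4, hw5]
        simp [len]
        omega
      | true =>
        have hjb : Nat.testBit j.val b = false := by
          cases hjb : Nat.testBit j.val b
          · rfl
          · rw [hib, hjb] at hb; exact absurd rfl hb
        obtain ⟨w2, hw2⟩ := seg_walk m P hP (Lbit i b') (L i) (T b')
          rfl (by simp [ends, hb', hib]) (by simp)
        obtain ⟨w3, hw3⟩ := seg_walk m P hP (TF' b') (T b') (F' b') rfl rfl (by simp)
        obtain ⟨w4, hw4⟩ := seg_walk' m P hP (Rbit j b') (R j) (F' b')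
          rfl (by simp [ends, hb', hjb]) (by simp)
        refine ⟨w1.append (w2.append (w3.append (w4.append w5))), ?_⟩
        simp only [SimpleGraph.Walk.length_append, hw1, hw2, hw3, hw4, hw5]
        simp [len]
        omega
    obtain ⟨w, hw⟩ := hup
    have hub := SimpleGraph.dist_le w
    -- lower bound
    obtain ⟨w', hw'⟩ := (w.reachable).exists_walk_length_eq_dist
    have hlb := walk_bound (segH (ends m) (len m P) (H1 P))
      (segH_lip (H1 P) (H1_cond m P)) w'
    simp only [segH_inl, H1, hw'] at hlb
    have hlb' : 4 * P < (A m P).dist (Sum.inl (L' i)) (Sum.inl (R' j)) := by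
      simp at hlb; exact lt_of_lt_of_eq hlb hw'
    omega
  · intro i
    obtain ⟨w1, hw1⟩ := seg_walk m P hP (L'L i) (L' i) (L i) rfl rfl (by simp)
    obtain ⟨w2, hw2⟩ := seg_walk m P hP (Llk i) (L i) lk rfl rfl (by simp)
    obtain ⟨w3, hw3⟩ := seg_walk m P hP (lklk1) lk lk1 rfl rfl (by simp)
    obtain ⟨w4, hw4⟩ := seg_walk m P hP (lk1rk1) lk1 rk1 rfl rfl (by simp)
    obtain ⟨w5, hw5⟩ := seg_walk' m P hP (rkrk1) rk rk1 rfl rfl (by simp)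
    obtain ⟨w6, hw6⟩ := seg_walk' m P hP (Rrk i) (R i) rk rfl rfl (by simp)
    obtain ⟨w7, hw7⟩ := seg_walk' m P hP (R'R i) (R' i) (R i) rfl rfl (by simp)
    have hup : ∃ w : (A m P).Walk (Sum.inl (L' i)) (Sum.inl (R' i)),
        w.length = 6 * P + 1 := by
      refine ⟨w1.append (w2.append (w3.append (w4.append (w5.append (w6.append w7))))), ?_⟩
      simp only [SimpleGraph.Walk.length_append, hw1, hw2, hw3, hw4, hw5, hw6, hw7]
      simp [len]
      omega
    obtain ⟨w, hw⟩ := hup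
    have hub := SimpleGraph.dist_le w
    obtain ⟨w', hw'⟩ := (w.reachable).exists_walk_length_eq_dist
    have hlb := walk_bound (segH (ends m) (len m P) (H2 P i))
      (segH_lip (H2 P i) (H2_cond m P i)) w'
    simp [segH_inl, H2, hw'] at hlb
    have hlb' : 6 * P < (A m P).dist (Sum.inl (L' i)) (Sum.inl (R' i)) := lt_of_lt_of_eq hlb hw'
    omega

end StretchDiam
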